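/- Assume A is an atomic symmetric integral non-associative relation algebra, 3 ≤ n, and for every sequence of n−2 pairs of diversity atoms u_1,v_1,...,u_{n-2},v_{n-2} of A the meet of the products u_1;v_1 · u_2;v_2 · ... · u_{n-2};v_{n-2} is nonzero. Suppose additionally that in the thinned construction C_E(A) from E^{23}_{r+3} with its canonical r-atom subalgebra E (r ≥ 4, 3 ≤ n ≤ r+3), any such product meet is nonzero: specifically, if each product u_i;v_i is neither 0' nor 1, there is a function f assigning to each i an atom a_{f(i)} of E with u_i + v_i ≤ J(a_{f(i)},0), and if some index j ∈ {1,...,r-1} is missed by f then J(a_j,0) ≤ u_i;v_i for all i, yielding a nonzero meet. -/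
import Mathlib


universe u v

/-- Non-associative relation algebras: Boolean algebras with a binary
relative multiplication `comp`, unary converse `conv`, and identity `ide`. -/
class NA (α : Type u) extends BooleanAlgebra α where
  comp : α → α → α
  conv : α → α
  ide : α
  comp_ide : ∀ x : α, comp x ide = x
  ide_comp : ∀ x : α, comp ide x = x
  conv_conv : ∀ x : α, conv (conv x) = x
  conv_sup : ∀ x y : α, conv (x ⊔ y) = conv x ⊔ conv y
  comp_sup : ∀ x y z : α, comp x (y ⊔ z) = comp x y ⊔ comp x z
  sup_comp : ∀ x y z : α, comp (x ⊔ y) z = comp x z ⊔ comp y z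
  peirce1 : ∀ x y z : α, comp x y ⊓ z = ⊥ ↔ comp (conv x) z ⊓ y = ⊥
  peirce2 : ∀ x y z : α, comp x y ⊓ z = ⊥ ↔ comp z (conv y) ⊓ x = ⊥

/-- Relation algebras: associative non-associative relation algebras. -/
class RA (α : Type u) extends NA α where
  comp_assoc : ∀ x y z : α, comp (comp x y) z = comp x (comp y z)

namespace NA

variable {α : Type u} [NA α]

/-- The diversity element 0'. -/
def div : α := (ide : α)ᶜ

/-- Converse is the identity. -/
def Symmetric (α : Type u) [NA α] : Prop := ∀ x : α, conv x = x

/-- The identity 1' is an atom. -/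
def Integral (α : Type u) [NA α] : Prop := IsAtom (ide : α)

/-- A diversity atom: an atom below 0'. -/
def DivAtom (x : α) : Prop := IsAtom x ∧ x ≤ (div : α)

/-- A subalgebra of a (non-associative) relation algebra. -/
structure Subalgebra (α : Type u) [NA α] where
  carrier : Set α
  bot_mem : ⊥ ∈ carrier
  top_mem : ⊤ ∈ carrier
  ide_mem : ide ∈ carrier
  compl_mem : ∀ x ∈ carrier, xᶜ ∈ carrier
  sup_mem : ∀ x ∈ carrier, ∀ y ∈ carrier, x ⊔ y ∈ carrier
  comp_mem : ∀ x ∈ carrier, ∀ y ∈ carrier, comp x y ∈ carrier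
  conv_mem : ∀ x ∈ carrier, conv x ∈ carrier

/-- An atom of a subalgebra: a minimal nonzero element of the subalgebra. -/
def Subalgebra.AtomOf (E : Subalgebra α) (a : α) : Prop :=
  a ∈ E.carrier ∧ a ≠ ⊥ ∧ ∀ b ∈ E.carrier, b ≤ a → b = ⊥ ∨ b = a

/-- A diversity atom of a subalgebra. -/
def Subalgebra.DivAtomOf (E : Subalgebra α) (a : α) : Prop :=
  E.AtomOf a ∧ a ≤ (div : α)

/-- `α` is (a copy of) the algebra E^{23}_q with atoms `e 0 = 1', e 1, …, e (q-1)`: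
symmetric, integral, distinct diversity atoms multiply to 0', and
`e i ; e i = (e i)ᶜ` for diversity atoms. -/
def IsE23 (q : ℕ) (e : Fin q → α) : Prop :=
  Symmetric α ∧ Integral α ∧
  Function.Injective e ∧ (∀ i : Fin q, (i : ℕ) = 0 → e i = ide) ∧
  (∀ i, IsAtom (e i)) ∧
  (∀ x : α, IsAtom x → ∃ i, x = e i) ∧
  (∀ i j : Fin q, (i : ℕ) ≠ 0 → (j : ℕ) ≠ 0 → i ≠ j →
    comp (e i) (e j) = (div : α)) ∧
  (∀ i : Fin q, (i : ℕ) ≠ 0 → comp (e i) (e i) = (e i)ᶜ)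

/-- The subalgebra `Q` of `α` is a copy of E^{23}_q with atoms `e i`. -/
def IsE23Sub (Q : Subalgebra α) (q : ℕ) (e : Fin q → α) : Prop :=
  Function.Injective e ∧ (∀ i : Fin q, (i : ℕ) = 0 → e i = ide) ∧
  (∀ i, Q.AtomOf (e i)) ∧
  (∀ x : α, Q.AtomOf x → ∃ i, x = e i) ∧
  (∀ i j : Fin q, (i : ℕ) ≠ 0 → (j : ℕ) ≠ 0 → i ≠ j →
    comp (e i) (e j) = (div : α)) ∧
  (∀ i : Fin q, (i : ℕ) ≠ 0 → comp (e i) (e i) = (e i)ᶜ)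

/-- `cov` is a cover map for the subalgebra `E`: it sends each atom of the
ambient algebra to the atom of `E` containing it. -/
def CoverMap (E : Subalgebra α) (cov : α → α) : Prop :=
  ∀ x : α, IsAtom x → E.AtomOf (cov x) ∧ x ≤ cov x

/-- The ambient atomic algebra is obtained from the subalgebra `B` by
splitting, with cover map `cov`. -/
def Splitting (B : Subalgebra α) (cov : α → α) : Prop :=
  CoverMap B cov ∧
  (∀ x y : α, DivAtom x → DivAtom y →
    (x = conv y → comp x y = comp (cov x) (cov y)) ∧
    (x ≠ conv y → comp x y = comp (cov x) (cov y) ⊓ (div : α)))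

/-- The ambient algebra is a special extension of its subalgebra `E`. -/
def SpecialExt (E : Subalgebra α) : Prop :=
  (∀ a b c : α, E.DivAtomOf a → E.DivAtomOf b → E.DivAtomOf c →
    ¬(a = b ∧ b = c) → c ≤ comp a b →
    ∀ x y : α, IsAtom x → IsAtom y → x ≤ a → y ≤ b → c ≤ comp x y) ∧
  (∀ a : α, E.DivAtomOf a → a ≤ comp a a →
    ∀ x y : α, IsAtom x → IsAtom y → x ≤ a → y ≤ a → comp x y ⊓ a ≠ ⊥)

/-- A flexible atom. -/
def Flexible (a : α) : Prop :=
  DivAtom a ∧ comp a a = ⊤ ∧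
  ∀ x : α, DivAtom x → x ≠ a → comp x a = (div : α)

/-- A flexible atom of a subalgebra. -/
def FlexibleOf (E : Subalgebra α) (a : α) : Prop :=
  E.DivAtomOf a ∧ comp a a = ⊤ ∧
  ∀ x : α, E.DivAtomOf x → x ≠ a → comp x a = (div : α)

/-- A flexible trio of diversity atoms. -/
def FlexTrio (a b c : α) : Prop :=
  DivAtom a ∧ DivAtom b ∧ DivAtom c ∧ a ≠ b ∧ a ≠ c ∧ b ≠ c ∧
  comp a a = ⊤ ∧ comp b b = ⊤ ∧ comp c c = ⊤ ∧
  comp a b = (div : α) ∧ comp a c = (div : α) ∧ comp b c = (div : α) ∧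
  ∀ x : α, IsAtom x → x ∉ ({(ide : α), a, b, c} : Set α) →
    (comp x a = (div : α) ∧ comp x b = (div : α)) ∨
    (comp x a = (div : α) ∧ comp x c = (div : α)) ∨
    (comp x b = (div : α) ∧ comp x c = (div : α))

/-- A flexible trio of diversity atoms of a subalgebra. -/
def FlexTrioOf (E : Subalgebra α) (a b c : α) : Prop :=
  E.DivAtomOf a ∧ E.DivAtomOf b ∧ E.DivAtomOf c ∧ a ≠ b ∧ a ≠ c ∧ b ≠ c ∧
  comp a a = ⊤ ∧ comp b b = ⊤ ∧ comp c c = ⊤ ∧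
  comp a b = (div : α) ∧ comp a c = (div : α) ∧ comp b c = (div : α) ∧
  ∀ d : α, E.DivAtomOf d → d ∉ ({a, b, c} : Set α) →
    (comp d a = (div : α) ∧ comp d b = (div : α)) ∨
    (comp d a = (div : α) ∧ comp d c = (div : α)) ∨
    (comp d b = (div : α) ∧ comp d c = (div : α))

/-- Basic k-by-k matrices of atoms. -/
def BasicMatrix (k : ℕ) (μ : Fin k → Fin k → α) : Prop :=
  (∀ i j, IsAtom (μ i j)) ∧ (∀ i, μ i i ≤ (ide : α)) ∧
  (∀ i j, conv (μ i j) = μ j i) ∧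
  (∀ i j l, μ i j ≤ comp (μ i l) (μ l j))

/-- The identity condition for a basic matrix. -/
def IdCond (k : ℕ) (μ : Fin k → Fin k → α) : Prop :=
  ∀ i j, μ i j = (ide : α) ↔ i = j

/-- The 1-point extension property. -/
def OnePointExt (α : Type u) [NA α] : Prop :=
  ∀ (k : ℕ) (μ : Fin k → Fin k → α), BasicMatrix k μ → IdCond k μ →
  ∀ x y : α, DivAtom x → DivAtom y → ∀ i j : Fin k, i ≠ j → μ i j ≤ comp x y →
  ∃ μ' : Fin (k + 1) → Fin (k + 1) → α, BasicMatrix (k + 1) μ' ∧ IdCond (k + 1) μ' ∧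
    (∀ l m : Fin k, μ' l.castSucc m.castSucc = μ l m) ∧
    μ' i.castSucc (Fin.last k) = x ∧ μ' (Fin.last k) j.castSucc = y

/-- A representation of `α` over a base set `X`. -/
structure Representation (α : Type u) [NA α] (X : Type v) where
  toFun : α → Set (X × X)
  inj : Function.Injective toFun
  map_sup : ∀ a b : α, toFun (a ⊔ b) = toFun a ∪ toFun b
  map_compl : ∀ a : α, toFun aᶜ = toFun ⊤ \ toFun a
  map_comp : ∀ a b : α,
    toFun (comp a b) = {p | ∃ z, (p.1, z) ∈ toFun a ∧ (z, p.2) ∈ toFun b}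
  map_conv : ∀ a : α, toFun (conv a) = {p | (p.2, p.1) ∈ toFun a}
  map_ide : toFun ide = {p | p ∈ toFun ⊤ ∧ p.1 = p.2}

/-- A complete representation: preserves all existing joins. -/
def Representation.IsComplete {α : Type u} [NA α] {X : Type v}
    (r : Representation α X) : Prop :=
  ∀ (S : Set α) (s : α), IsLUB S s → r.toFun s = ⋃ a ∈ S, r.toFun a

/-- Representability. -/
def Representable (α : Type u) [NA α] : Prop :=
  ∃ X : Type u, Nonempty (Representation α X)

/-- A representation of a subalgebra `E` over a base set `X`. -/
structure SubRepresentation (E : Subalgebra α) (X : Type v) where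
  toFun : α → Set (X × X)
  inj : ∀ x ∈ E.carrier, ∀ y ∈ E.carrier, toFun x = toFun y → x = y
  map_sup : ∀ x ∈ E.carrier, ∀ y ∈ E.carrier, toFun (x ⊔ y) = toFun x ∪ toFun y
  map_compl : ∀ x ∈ E.carrier, toFun xᶜ = toFun ⊤ \ toFun x
  map_comp : ∀ x ∈ E.carrier, ∀ y ∈ E.carrier,
    toFun (comp x y) = {p | ∃ z, (p.1, z) ∈ toFun x ∧ (z, p.2) ∈ toFun y}
  map_conv : ∀ x ∈ E.carrier, toFun (conv x) = {p | (p.2, p.1) ∈ toFun x}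
  map_ide : toFun ide = {p | p ∈ toFun ⊤ ∧ p.1 = p.2}

/-- A homomorphism of (non-associative) relation algebras. -/
structure Hom (α : Type u) (β : Type v) [NA α] [NA β] where
  toFun : α → β
  map_sup : ∀ a b : α, toFun (a ⊔ b) = toFun a ⊔ toFun b
  map_compl : ∀ a : α, toFun aᶜ = (toFun a)ᶜ
  map_comp : ∀ a b : α, toFun (comp a b) = comp (toFun a) (toFun b)
  map_conv : ∀ a : α, toFun (conv a) = conv (toFun a)
  map_ide : toFun ide = ide

/-- The thinning relation T(i,j,k) ⟺ (i ≤ j = k) ∨ (j ≤ k = i) ∨ (k ≤ i = j). -/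
def T3 (i j k : ℕ) : Prop :=
  (i ≤ j ∧ j = k) ∨ (j ≤ k ∧ k = i) ∨ (k ≤ i ∧ i = j)

/-- The type of diversity atoms of `α`. -/
abbrev DAt (α : Type u) [NA α] : Type u := {x : α // DivAtom x}

/-- Atoms of the algebra C_E(A): the identity atom `none` together with
copies `some (x, i)` of each diversity atom `x` of `A`, for `i ∈ ω`. -/
abbrev CAtom (α : Type u) [NA α] : Type u := Option (DAt α × ℕ)

/-- The cycle relation of the atom structure of C_E(A), relative to the cover
map `cov` of the subalgebra E. -/
def Cyc (cov : α → α) : CAtom α → CAtom α → CAtom α → Prop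
  | none, none, none => True
  | none, some p, some q => p = q
  | some p, none, some q => p = q
  | some p, some q, none => p = q
  | some p, some q, some r =>
      r.1.1 ≤ comp p.1.1 q.1.1 ∧
      (cov p.1.1 = cov q.1.1 ∧ cov q.1.1 = cov r.1.1 → T3 p.2 q.2 r.2)
  | _, _, _ => False

/-- Relative multiplication in the complex algebra C_E(A). -/
def Ccomp (cov : α → α) (X Y : Set (CAtom α)) : Set (CAtom α) :=
  {w | ∃ u ∈ X, ∃ v ∈ Y, Cyc cov u v w}

/-- The element J(a, n) of C_E(A). -/
def Jel (a : α) (n : ℕ) : Set (CAtom α) :=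
  {w | (∃ p : DAt α × ℕ, w = some p ∧ p.1.1 ≤ a ∧ n ≤ p.2) ∨
       (w = none ∧ (ide : α) ≤ a)}

/-- The atom set B_n of the finite subalgebra of C_E(A). -/
def Bset (E : Subalgebra α) (n : ℕ) : Set (Set (CAtom α)) :=
  {s | s = ({none} : Set (CAtom α))} ∪
  {s | ∃ (x : DAt α) (i : ℕ), i < n ∧ s = {some (x, i)}} ∪
  {s | ∃ a : α, E.DivAtomOf a ∧ s = Jel a n}

/-- Subalgebra of C_E(A) generated by a set `G` of elements. -/
inductive GenFrom (cov : α → α) (G : Set (Set (CAtom α))) : Set (CAtom α) → Prop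
  | base {s : Set (CAtom α)} : s ∈ G → GenFrom cov G s
  | bot : GenFrom cov G ∅
  | idel : GenFrom cov G ({none} : Set (CAtom α))
  | compl {s : Set (CAtom α)} : GenFrom cov G s → GenFrom cov G sᶜ
  | sup {s t : Set (CAtom α)} : GenFrom cov G s → GenFrom cov G t →
      GenFrom cov G (s ∪ t)
  | cmp {s t : Set (CAtom α)} : GenFrom cov G s → GenFrom cov G t →
      GenFrom cov G (Ccomp cov s t)

/-- Membership in the subalgebra B of C_E(A) generated by the atoms. -/
def Gen (cov : α → α) : Set (CAtom α) → Prop :=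
  GenFrom cov {s | ∃ w : CAtom α, s = {w}}

end NA

namespace NA

variable {α : Type u} [NA α]

lemma aux_atom_le_atom {z x : α} (hz : IsAtom z) (hx : IsAtom x) (h : z ≤ x) : z = x :=
  (hx.le_iff.mp h).resolve_left hz.1

lemma aux_atom_ne_le_compl {z x : α} (hz : IsAtom z) (hx : IsAtom x) (h : z ≠ x) :
    z ≤ xᶜ := by
  refine le_compl_iff_disjoint_right.mpr (disjoint_iff.mpr ?_)
  rcases hz.le_iff.mp (inf_le_left : z ⊓ x ≤ z) with h1 | h1
  · exact h1
  · exact absurd (aux_atom_le_atom hz hx (h1.symm.le.trans inf_le_right)) h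

lemma aux_atom_eq_of_le_sup {z x y : α} (hz : IsAtom z) (hx : IsAtom x) (hy : IsAtom y)
    (h : z ≤ x ⊔ y) : z = x ∨ z = y := by
  by_contra hc
  push_neg at hc
  have h1 : z ⊓ x = ⊥ :=
    disjoint_iff.mp (le_compl_iff_disjoint_right.mp (aux_atom_ne_le_compl hz hx hc.1))
  have h2 : z ⊓ y = ⊥ :=
    disjoint_iff.mp (le_compl_iff_disjoint_right.mp (aux_atom_ne_le_compl hz hy hc.2))
  have hb : z = ⊥ := by
    have hzle : z ≤ (z ⊓ x) ⊔ (z ⊓ y) := by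
      rw [← inf_sup_left]; exact le_inf le_rfl h
    rw [h1, h2, sup_idem] at hzle
    exact le_bot_iff.mp hzle
  exact hz.1 hb

lemma aux_T3_max (m k : ℕ) : T3 m k (max m k) := by unfold T3; omega

lemma aux_mem_Ccomp {cov : α → α} {a b w : CAtom α} :
    w ∈ Ccomp cov {a} {b} ↔ Cyc cov a b w := by
  simp [Ccomp]

lemma aux_Cyc_sss {cov : α → α} {p q rr : DAt α × ℕ} :
    Cyc cov (some p) (some q) (some rr) ↔
      (rr.1.1 ≤ comp p.1.1 q.1.1 ∧
       (cov p.1.1 = cov q.1.1 ∧ cov q.1.1 = cov rr.1.1 → T3 p.2 q.2 rr.2)) := Iff.rfl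

lemma aux_Cyc_ssn {cov : α → α} {p q : DAt α × ℕ} :
    Cyc cov (some p) (some q) none ↔ p = q := Iff.rfl

end NA
/-- In the thinned construction C_E(A) from A = E^{23}_{r+3} with
its canonical r-atom subalgebra E (4 ≤ r, 3 ≤ n ≤ r+3), for any n−2 pairs of
diversity atoms u_i, v_i of C_E(A) the meet of the products u_i;v_i is nonzero;
moreover if each product is neither 0' nor 1, then there is a function f with
u_i + v_i ≤ J(a_{f(i)}, 0), and if an index j ∈ {1,…,r−1} is missed by f then
J(a_j, 0) ≤ u_i;v_i for all i. -/
theorem stmt19 {α : Type} [RA α] [Fintype α] (r n : ℕ) (hr : 4 ≤ r)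
    (hn : 3 ≤ n) (hnr : n ≤ r + 3)
    (e : Fin (r + 3) → α) (hE23 : NA.IsE23 (r + 3) e)
    (aa : Fin r → α)
    (h0 : aa ⟨0, by omega⟩ = (NA.ide : α))
    (h1 : aa ⟨1, by omega⟩ = e ⟨1, by omega⟩ ⊔ e ⟨2, by omega⟩)
    (h2 : aa ⟨2, by omega⟩ = e ⟨3, by omega⟩ ⊔ e ⟨4, by omega⟩)
    (h3 : aa ⟨3, by omega⟩ = e ⟨5, by omega⟩ ⊔ e ⟨6, by omega⟩)
    (hrest : ∀ i : Fin r, 4 ≤ (i : ℕ) →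
      aa i = e ⟨(i : ℕ) + 3, Nat.add_lt_add_right i.isLt 3⟩)
    (cov : α → α)
    (hcov : ∀ x : α, NA.DivAtom x → ∃ i : Fin r, cov x = aa i ∧ x ≤ aa i)
    (u v : Fin (n - 2) → NA.DAt α × ℕ) :
    (⋂ i : Fin (n - 2),
      NA.Ccomp cov {(some (u i) : NA.CAtom α)} {some (v i)}).Nonempty ∧
    ((∀ i : Fin (n - 2),
        NA.Ccomp cov {(some (u i) : NA.CAtom α)} {some (v i)} ≠
          ({none} : Set (NA.CAtom α))ᶜ ∧
        NA.Ccomp cov {(some (u i) : NA.CAtom α)} {some (v i)} ≠ Set.univ) →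
      ∃ f : Fin (n - 2) → Fin r,
        (∀ i : Fin (n - 2), f i ≠ ⟨0, by omega⟩ ∧
          (u i).1.1 ≤ aa (f i) ∧ (v i).1.1 ≤ aa (f i)) ∧
        ∀ j : Fin r, j ≠ ⟨0, by omega⟩ → (∀ i : Fin (n - 2), f i ≠ j) →
          ∀ i : Fin (n - 2),
            NA.Jel (aa j) 0 ⊆
              NA.Ccomp cov {(some (u i) : NA.CAtom α)} {some (v i)}) := by  classical
  obtain ⟨hsymm, hint, hinj, hide0, hatomE, hsurj, hdist, hsame⟩ := hE23
  have he0 : e ⟨0, by omega⟩ = (NA.ide : α) := hide0 _ rfl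
  have hEne : ∀ {p s : Fin (r+3)}, (p : ℕ) ≠ (s : ℕ) → e p ≠ e s := by
    intro p s h hps
    exact h (congrArg Fin.val (hinj hps))
  have hDivE : ∀ p : Fin (r+3), (p : ℕ) ≠ 0 → NA.DivAtom (e p) := by
    intro p hp
    refine ⟨hatomE p, ?_⟩
    have hne : e p ≠ NA.ide := by
      rw [← he0]; exact hEne (by simpa using hp)
    exact NA.aux_atom_ne_le_compl (hatomE p) hint hne
  have hErep : ∀ x : α, NA.DivAtom x → ∃ s : Fin (r+3), (s : ℕ) ≠ 0 ∧ x = e s := by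
    intro x hx
    obtain ⟨s, hs⟩ := hsurj x hx.1
    refine ⟨s, ?_, hs⟩
    intro h0s
    have hxi : x = NA.ide := by rw [hs, hide0 s h0s]
    have hxb : x = ⊥ := le_bot_iff.mp (by
      calc x ≤ NA.ide ⊓ (NA.ide : α)ᶜ := le_inf (le_of_eq hxi) hx.2
        _ = ⊥ := by simp)
    exact hx.1.1 hxb
  have hcompDiv : ∀ x y z : α, NA.DivAtom x → NA.DivAtom y → NA.DivAtom z →
      (z ≠ x ∨ x ≠ y) → z ≤ NA.comp x y := by
    intro x y z hx hy hz hor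
    obtain ⟨s, hs0, hsx⟩ := hErep x hx
    obtain ⟨t, ht0, hty⟩ := hErep y hy
    by_cases hst : s = t
    · subst hst
      have hxy : x = y := by rw [hsx, hty]
      have hzx : z ≠ x := by
        rcases hor with h | h
        · exact h
        · exact absurd hxy h
      rw [hsx, hty, hsame s hs0]
      exact NA.aux_atom_ne_le_compl hz.1 (hatomE s) (by rwa [← hsx])
    · rw [hsx, hty, hdist s t hs0 ht0 hst]
      exact hz.2
  have haacases : ∀ j : Fin r, (j : ℕ) ≠ 0 →
      (∃ p q : Fin (r+3), (p : ℕ) = 2*(j : ℕ)-1 ∧ (q : ℕ) = 2*(j : ℕ) ∧ (j : ℕ) ≤ 3 ∧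
        aa j = e p ⊔ e q) ∨
      (∃ p : Fin (r+3), (p : ℕ) = (j : ℕ)+3 ∧ 4 ≤ (j : ℕ) ∧ aa j = e p) := by
    intro j hj
    have hcase : (j : ℕ) = 1 ∨ (j : ℕ) = 2 ∨ (j : ℕ) = 3 ∨ 4 ≤ (j : ℕ) := by omega
    rcases hcase with h | h | h | h
    · left
      have hj1 : j = ⟨1, by omega⟩ := Fin.ext h
      exact ⟨⟨1, by omega⟩, ⟨2, by omega⟩, by show (1:ℕ) = 2*(j:ℕ)-1; omega,
        by show (2:ℕ) = 2*(j:ℕ); omega, by omega, by rw [hj1]; exact h1⟩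
    · left
      have hj1 : j = ⟨2, by omega⟩ := Fin.ext h
      exact ⟨⟨3, by omega⟩, ⟨4, by omega⟩, by show (3:ℕ) = 2*(j:ℕ)-1; omega,
        by show (4:ℕ) = 2*(j:ℕ); omega, by omega, by rw [hj1]; exact h2⟩
    · left
      have hj1 : j = ⟨3, by omega⟩ := Fin.ext h
      exact ⟨⟨5, by omega⟩, ⟨6, by omega⟩, by show (5:ℕ) = 2*(j:ℕ)-1; omega,
        by show (6:ℕ) = 2*(j:ℕ); omega, by omega, by rw [hj1]; exact h3⟩
    · right
      exact ⟨⟨(j : ℕ)+3, by omega⟩, rfl, h, hrest j h⟩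
  have hle_aa : ∀ (j : Fin r), (j : ℕ) ≠ 0 → ∀ x : α, NA.DivAtom x → x ≤ aa j →
      ∀ s : Fin (r+3), x = e s →
      (((j : ℕ) ≤ 3 ∧ ((s : ℕ) = 2*(j : ℕ)-1 ∨ (s : ℕ) = 2*(j : ℕ))) ∨
       (4 ≤ (j : ℕ) ∧ (s : ℕ) = (j : ℕ)+3)) := by
    intro j hj x hx hxj s hxs
    rcases haacases j hj with ⟨p, q, hp, hq, hj3, haaj⟩ | ⟨p, hp, hj4, haaj⟩
    · left
      refine ⟨hj3, ?_⟩
      rw [haaj, hxs] at hxj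
      rcases NA.aux_atom_eq_of_le_sup (hatomE s) (hatomE p) (hatomE q) hxj with h | h
      · left; rw [← hp]; exact congrArg Fin.val (hinj h)
      · right; rw [← hq]; exact congrArg Fin.val (hinj h)
    · right
      refine ⟨hj4, ?_⟩
      rw [haaj, hxs] at hxj
      rw [← hp]
      exact congrArg Fin.val (hinj (NA.aux_atom_le_atom (hatomE s) (hatomE p) hxj))
  have hj0 : ∀ x : α, NA.DivAtom x → ∀ j : Fin r, x ≤ aa j → (j : ℕ) ≠ 0 := by
    intro x hx j hxj hj
    have hjeq : j = ⟨0, by omega⟩ := Fin.ext hj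
    rw [hjeq, h0] at hxj
    have hxb : x = ⊥ := le_bot_iff.mp (by
      calc x ≤ NA.ide ⊓ (NA.ide : α)ᶜ := le_inf hxj hx.2
        _ = ⊥ := by simp)
    exact hx.1.1 hxb
  have hUniq : ∀ x : α, NA.DivAtom x → ∀ j j' : Fin r, x ≤ aa j → x ≤ aa j' → j = j' := by
    intro x hx j j' hxj hxj'
    obtain ⟨s, hs0, hxs⟩ := hErep x hx
    have c1 := hle_aa j (hj0 x hx j hxj) x hx hxj s hxs
    have c2 := hle_aa j' (hj0 x hx j' hxj') x hx hxj' s hxs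
    apply Fin.ext
    rcases c1 with ⟨g1, g2 | g2⟩ | ⟨g1, g2⟩ <;>
      rcases c2 with ⟨g3, g4 | g4⟩ | ⟨g3, g4⟩ <;> omega
  choose jx hjx1 hjx2 using fun i => hcov (u i).1.1 (u i).1.2
  choose jy hjy1 hjy2 using fun i => hcov (v i).1.1 (v i).1.2
  have hjx0 : ∀ i, ((jx i : Fin r) : ℕ) ≠ 0 := fun i => hj0 _ (u i).1.2 _ (hjx2 i)
  have hcovz : ∀ (z : α), NA.DivAtom z → ∀ j : Fin r, z ≤ aa j → cov z = aa j := by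
    intro z hz j hzj
    obtain ⟨j', hc, hle⟩ := hcov z hz
    rw [hUniq z hz j j' hzj hle]
    exact hc
  -- KEY: a common witness cover index
  have key : ∃ (j : Fin r) (z : α) (k : ℕ), (j : ℕ) ≠ 0 ∧ NA.DivAtom z ∧ z ≤ aa j ∧
      ∀ i : Fin (n-2), jx i = j → jy i = j →
        z ≤ NA.comp (u i).1.1 (v i).1.1 ∧ NA.T3 (u i).2 (v i).2 k := by
    by_contra hno
    push_neg at hno
    set P : Fin r → Finset (Fin (n-2)) :=
      fun j => Finset.univ.filter (fun i => jx i = j ∧ jy i = j) with hP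
    have hmemP : ∀ (j : Fin r) i, i ∈ P j ↔ (jx i = j ∧ jy i = j) := by
      intro j i
      simp only [hP, Finset.mem_filter, Finset.mem_univ, true_and]
    have hone : ∀ j : Fin r, (j : ℕ) ≠ 0 → (P j).Nonempty := by
      intro j hj
      obtain ⟨z, hz, hzj⟩ : ∃ z : α, NA.DivAtom z ∧ z ≤ aa j := by
        rcases haacases j hj with ⟨p, q, hp, hq, hj3, haaj⟩ | ⟨p, hp, hj4, haaj⟩
        · exact ⟨e p, hDivE p (by omega), by rw [haaj]; exact le_sup_left⟩
        · exact ⟨e p, hDivE p (by omega), le_of_eq haaj.symm⟩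
      obtain ⟨i, hi1, hi2, _⟩ := hno j z 0 hj hz hzj
      exact ⟨i, (hmemP j i).mpr ⟨hi1, hi2⟩⟩
    have htwo : ∀ j : Fin r, (j : ℕ) ≠ 0 → (j : ℕ) ≤ 3 → 2 ≤ (P j).card := by
      intro j hj hj3
      by_contra hlt
      push_neg at hlt
      have hcard1 : (P j).card = 1 := by
        have := Finset.card_pos.mpr (hone j hj)
        omega
      obtain ⟨i0, hi0⟩ := Finset.card_eq_one.mp hcard1
      have hi0m : i0 ∈ P j := by rw [hi0]; exact Finset.mem_singleton_self i0
      obtain ⟨hjxi, hjyi⟩ := (hmemP j i0).mp hi0m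
      rcases haacases j hj with ⟨p, q, hp, hq, _, haaj⟩ | ⟨p, hp, hj4, _⟩
      · obtain ⟨z, hz, hzj, hzcomp⟩ :
            ∃ z : α, NA.DivAtom z ∧ z ≤ aa j ∧ z ≤ NA.comp (u i0).1.1 (v i0).1.1 := by
          by_cases hxy : (u i0).1.1 = (v i0).1.1
          · have hXj : (u i0).1.1 ≤ aa j := by rw [← hjxi]; exact hjx2 i0
            obtain ⟨s, hs0, hxs⟩ := hErep _ (u i0).1.2
            have hs : e s = e p ∨ e s = e q := by
              apply NA.aux_atom_eq_of_le_sup (hatomE s) (hatomE p) (hatomE q)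
              rw [← hxs, ← haaj]
              exact hXj
            rcases hs with h | h
            · refine ⟨e q, hDivE q (by omega), by rw [haaj]; exact le_sup_right, ?_⟩
              apply hcompDiv _ _ _ (u i0).1.2 (v i0).1.2 (hDivE q (by omega))
              left
              rw [hxs, h]
              exact hEne (by omega)
            · refine ⟨e p, hDivE p (by omega), by rw [haaj]; exact le_sup_left, ?_⟩
              apply hcompDiv _ _ _ (u i0).1.2 (v i0).1.2 (hDivE p (by omega))
              left
              rw [hxs, h]
              exact hEne (by omega)
          · refine ⟨e p, hDivE p (by omega), by rw [haaj]; exact le_sup_left, ?_⟩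
            exact hcompDiv _ _ _ (u i0).1.2 (v i0).1.2 (hDivE p (by omega)) (Or.inr hxy)
        obtain ⟨i', hi'1, hi'2, hviol⟩ := hno j z (max (u i0).2 (v i0).2) hj hz hzj
        have hii : i' = i0 := by
          have hmem : i' ∈ P j := (hmemP j i').mpr ⟨hi'1, hi'2⟩
          rw [hi0] at hmem
          exact Finset.mem_singleton.mp hmem
        subst hii
        exact (hviol hzcomp) (NA.aux_T3_max _ _)
      · omega
    have hdisjP : ∀ j1 ∈ (Finset.univ : Finset (Fin r)), ∀ j2 ∈ Finset.univ,
        j1 ≠ j2 → Disjoint (P j1) (P j2) := by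
      intro j1 _ j2 _ hne
      refine Finset.disjoint_left.mpr ?_
      intro i hi1 hi2
      obtain ⟨a1, -⟩ := (hmemP j1 i).mp hi1
      obtain ⟨a2, -⟩ := (hmemP j2 i).mp hi2
      exact hne (a1.symm.trans a2)
    have hub : ∑ j : Fin r, (P j).card ≤ n - 2 := by
      rw [← Finset.card_biUnion hdisjP]
      calc (Finset.univ.biUnion P).card
          ≤ (Finset.univ : Finset (Fin (n-2))).card :=
            Finset.card_le_card (Finset.subset_univ _)
        _ = n - 2 := by simp
    have hwt : ∀ j : Fin r,
        (if (j : ℕ) = 0 then 0 else if (j : ℕ) ≤ 3 then 2 else 1) ≤ (P j).card := by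
      intro j
      by_cases hj : (j : ℕ) = 0
      · simp [hj]
      · by_cases hj3 : (j : ℕ) ≤ 3
        · rw [if_neg hj, if_pos hj3]
          exact htwo j hj hj3
        · rw [if_neg hj, if_neg hj3]
          exact Finset.card_pos.mpr (hone j hj)
    have hsumw : (r + 2 : ℕ) ≤
        ∑ j : Fin r, (if (j : ℕ) = 0 then 0 else if (j : ℕ) ≤ 3 then 2 else 1) := by
      rw [Fin.sum_univ_eq_sum_range (fun k => if k = 0 then 0 else if k ≤ 3 then 2 else 1) r]
      rw [Finset.range_eq_Ico, ← Finset.sum_Ico_consecutive _ (by omega : 0 ≤ 4) (by omega : 4 ≤ r)]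
      have hA : ∑ k ∈ Finset.Ico 0 4, (if k = 0 then (0:ℕ) else if k ≤ 3 then 2 else 1) = 6 := by
        decide
      have hB : ∑ k ∈ Finset.Ico 4 r, (if k = 0 then (0:ℕ) else if k ≤ 3 then 2 else 1)
          = r - 4 := by
        have hcg : ∀ k ∈ Finset.Ico 4 r,
            (if k = 0 then (0:ℕ) else if k ≤ 3 then 2 else 1) = 1 := by
          intro k hk
          have := (Finset.mem_Ico.mp hk).1
          rw [if_neg (by omega), if_neg (by omega)]
        rw [Finset.sum_congr rfl hcg, Finset.sum_const, Nat.card_Ico, smul_eq_mul, mul_one]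
      omega
    have hge : (r + 2 : ℕ) ≤ ∑ j : Fin r, (P j).card :=
      hsumw.trans (Finset.sum_le_sum (fun j _ => hwt j))
    omega
  obtain ⟨j, z, k, hjne, hz, hzj, hall⟩ := key
  have hcovzj : cov z = aa j := hcovz z hz j hzj
  constructor
  · -- Part 1: nonempty intersection
    refine ⟨some (⟨z, hz⟩, k), Set.mem_iInter.mpr ?_⟩
    intro i
    rw [NA.aux_mem_Ccomp]
    refine NA.aux_Cyc_sss.mpr ?_
    by_cases hij : jx i = j ∧ jy i = j
    · have h := hall i hij.1 hij.2
      exact ⟨h.1, fun _ => h.2⟩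
    · constructor
      · by_cases hxy : (u i).1.1 = (v i).1.1
        · have hzx : z ≠ (u i).1.1 := by
            intro hzeq
            have hXaa : (u i).1.1 ≤ aa j := by rw [← hzeq]; exact hzj
            have hx2 : jx i = j := hUniq _ (u i).1.2 _ _ (hjx2 i) hXaa
            have hy2 : jy i = j := by
              apply hUniq _ (v i).1.2 _ _ (hjy2 i)
              rw [← hxy]; exact hXaa
            exact hij ⟨hx2, hy2⟩
          exact hcompDiv _ _ _ (u i).1.2 (v i).1.2 hz (Or.inl hzx)
        · exact hcompDiv _ _ _ (u i).1.2 (v i).1.2 hz (Or.inr hxy)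
      · intro hcc
        exfalso
        have h4 : aa (jy i) = aa j := by rw [← hjy1 i, hcc.2]; exact hcovzj
        have hYj : (v i).1.1 ≤ aa j := by rw [← h4]; exact hjy2 i
        have hjyj : jy i = j := hUniq _ (v i).1.2 _ _ (hjy2 i) hYj
        have h5 : aa (jx i) = aa j := by rw [← hjx1 i, hcc.1, hcc.2]; exact hcovzj
        have hXj : (u i).1.1 ≤ aa j := by rw [← h5]; exact hjx2 i
        have hjxj : jx i = j := hUniq _ (u i).1.2 _ _ (hjx2 i) hXj
        exact hij ⟨hjxj, hjyj⟩
  · -- Part 2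
    intro hne
    have hjeq : ∀ i, jx i = jy i := by
      intro i
      by_contra hne12
      have hXY : (u i).1.1 ≠ (v i).1.1 := by
        intro h
        apply hne12
        apply hUniq _ (u i).1.2 _ _ (hjx2 i)
        rw [h]; exact hjy2 i
      apply (hne i).1
      ext w
      simp only [Set.mem_compl_iff, Set.mem_singleton_iff]
      rw [NA.aux_mem_Ccomp]
      cases w with
      | none =>
        exact iff_of_false
          (fun h => hXY (congrArg (fun t : NA.DAt α × ℕ => t.1.1) (NA.aux_Cyc_ssn.mp h)))
          (by simp)
      | some p =>
        refine iff_of_true (NA.aux_Cyc_sss.mpr ⟨?_, ?_⟩) (by simp)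
        · exact hcompDiv _ _ _ (u i).1.2 (v i).1.2 p.1.2 (Or.inr hXY)
        · intro hcc
          exfalso
          have h4 : aa (jx i) = aa (jy i) := by rw [← hjx1 i, ← hjy1 i]; exact hcc.1
          apply hne12
          apply hUniq _ (u i).1.2 _ _ (hjx2 i)
          rw [← h4]; exact hjx2 i
    refine ⟨jx, ?_, ?_⟩
    · intro i
      refine ⟨?_, hjx2 i, ?_⟩
      · intro h
        exact hjx0 i (by rw [h])
      · rw [hjeq i]; exact hjy2 i
    · intro j' hj' hmiss i w hw
      have hj'ne : (j' : ℕ) ≠ 0 := fun h => hj' (Fin.ext h)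
      rw [NA.aux_mem_Ccomp]
      rcases hw with ⟨p, hwp, hpj, -⟩ | ⟨hwn, hidej⟩
      · subst hwp
        refine NA.aux_Cyc_sss.mpr ⟨?_, ?_⟩
        · have hzx : p.1.1 ≠ (u i).1.1 := by
            intro hzeq
            apply hmiss i
            apply hUniq _ (u i).1.2 _ _ (hjx2 i)
            rw [← hzeq]; exact hpj
          exact hcompDiv _ _ _ (u i).1.2 (v i).1.2 p.1.2 (Or.inl hzx)
        · intro hcc
          exfalso
          have hcovp : cov p.1.1 = aa j' := hcovz _ p.1.2 j' hpj
          have h4 : aa (jy i) = aa j' := by rw [← hjy1 i, hcc.2]; exact hcovp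
          have h5 : jy i = j' :=
            hUniq _ (v i).1.2 _ _ (hjy2 i) (by rw [← h4]; exact hjy2 i)
          exact hmiss i ((hjeq i).trans h5)
      · exfalso
        rcases haacases j' hj'ne with ⟨p, q, hp, hq, -, haaj⟩ | ⟨p, hp, -, haaj⟩
        · rw [haaj] at hidej
          rcases NA.aux_atom_eq_of_le_sup hint (hatomE p) (hatomE q) hidej with h | h
          · have h0p : (0 : ℕ) = (p : ℕ) := congrArg Fin.val (hinj (he0.trans h))
            omega
          · have h0q : (0 : ℕ) = (q : ℕ) := congrArg Fin.val (hinj (he0.trans h))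
            omega
        · rw [haaj] at hidej
          have h := NA.aux_atom_le_atom hint (hatomE p) hidej
          have h0p : (0 : ℕ) = (p : ℕ) := congrArg Fin.val (hinj (he0.trans h))
          omega
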